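/- Let Γ be a countable discrete group acting measurably on a probability space (B, ν), let A be a unital C*-algebra, let π : Γ → A be a group homomorphism taking values in the unitary group of A, and let b ↦ β_b be a map assigning to each b ∈ B a state β_b on A. Fix γ ∈ Γ and assume: (i) for ν-almost every b ∈ B one has β_{γ·b}(x) = β_b(π(γ)* x π(γ)) for all x ∈ A; and (ii) for ν-almost every b ∈ B the states β_{γ·b} and β_b are pairwise singular. Then β_b(π(γ)) = 0 for ν-almost every b ∈ B. -/

import Mathlib

open scoped ComplexOrder
open MeasureTheory Filter

section StateAux

variable {A : Type*} [NormedRing A] [StarRing A] [CStarRing A]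
    [NormedAlgebra ℂ A] [CompleteSpace A] [StarModule ℂ A]
    [PartialOrder A] [StarOrderedRing A]

set_option linter.unusedSectionVars false

lemma state_mono (φ : A →ₗ[ℂ] ℂ) (hpos : ∀ a : A, 0 ≤ a → 0 ≤ φ a)
    {a b : A} (hab : a ≤ b) : φ a ≤ φ b :=
  sub_nonneg.mp (by rw [← map_sub]; exact hpos _ (sub_nonneg.mpr hab))

lemma nonneg_conj_eq {z : ℂ} (hz : 0 ≤ z) : (starRingEnd ℂ) z = z := by
  rw [Complex.conj_eq_iff_im]
  exact ((Complex.le_def.mp hz).2).symm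

/-- A positive functional is real on selfadjoint elements. -/
lemma state_conj_selfAdjoint (φ : A →ₗ[ℂ] ℂ) (hpos : ∀ a : A, 0 ≤ a → 0 ≤ φ a)
    {a : A} (ha : IsSelfAdjoint a) : (starRingEnd ℂ) (φ a) = φ a := by
  letI : CStarAlgebra A := { ‹NormedRing A›, ‹StarRing A›, ‹CompleteSpace A›, ‹CStarRing A›,
    ‹NormedAlgebra ℂ A›, ‹StarModule ℂ A› with }
  set c : A := algebraMap ℝ A ‖a‖ with hc
  have h1 : (0 : A) ≤ a + c := by
    have h := ha.neg_algebraMap_norm_le_self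
    have h' := sub_nonneg.mpr h
    rwa [sub_neg_eq_add] at h'
  have hφc : φ c = (‖a‖ : ℂ) * φ 1 := by
    rw [hc, Algebra.algebraMap_eq_smul_one, LinearMap.map_smul_of_tower, Complex.real_smul]
  have hφ1 : (starRingEnd ℂ) (φ 1) = φ 1 := nonneg_conj_eq (hpos 1 zero_le_one)
  have h2 : φ a = φ (a + c) - (‖a‖ : ℂ) * φ 1 := by rw [map_add, hφc]; ring
  rw [h2, map_sub, nonneg_conj_eq (hpos _ h1), map_mul, hφ1, Complex.conj_ofReal]

/-- A positive functional is hermitian. -/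
lemma state_conj (φ : A →ₗ[ℂ] ℂ) (hpos : ∀ a : A, 0 ≤ a → 0 ≤ φ a)
    (z : A) : φ (star z) = (starRingEnd ℂ) (φ z) := by
  set x : A := (2 : ℂ)⁻¹ • (z + star z) with hx
  set y : A := ((Complex.I) * (2 : ℂ)⁻¹) • (star z - z) with hy
  have hxsa : IsSelfAdjoint x := by
    rw [hx, IsSelfAdjoint, star_smul, star_add, star_star, add_comm]
    norm_num [Complex.ext_iff]
  have hysa : IsSelfAdjoint y := by
    rw [hy, IsSelfAdjoint, star_smul, star_sub, star_star, ← neg_sub, smul_neg, ← neg_smul]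
    congr 1
    simp [Complex.ext_iff]
  have hz : z = x + Complex.I • y := by
    rw [hx, hy, smul_smul]
    have h3 : Complex.I * (Complex.I * (2 : ℂ)⁻¹) = -(2 : ℂ)⁻¹ := by
      rw [← mul_assoc, Complex.I_mul_I]; ring
    rw [h3, neg_smul, ← smul_neg, neg_sub, ← smul_add, add_add_sub_cancel, ← two_smul ℂ z,
      smul_smul]
    norm_num
  have hstarz : star z = x - Complex.I • y := by
    rw [hz, star_add, hxsa.star_eq, star_smul, hysa.star_eq, Complex.star_def,
      Complex.conj_I, neg_smul]
    abel
  have hfx := state_conj_selfAdjoint φ hpos hxsa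
  have hfy := state_conj_selfAdjoint φ hpos hysa
  have e1 : φ (star z) = φ x - Complex.I * φ y := by
    rw [hstarz]
    simp only [map_sub, LinearMap.map_smul, smul_eq_mul]
  have e2 : φ z = φ x + Complex.I * φ y := by
    conv_lhs => rw [hz]
    simp only [map_add, LinearMap.map_smul, smul_eq_mul]
  rw [e1, e2, map_add, map_mul, Complex.conj_I, hfx, hfy]
  ring

/-- Cauchy-Schwarz inequality for a positive functional. -/
lemma state_cauchy_schwarz (φ : A →ₗ[ℂ] ℂ) (hpos : ∀ a : A, 0 ≤ a → 0 ≤ φ a)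
    (x y : A) :
    ‖φ (star x * y)‖ * ‖φ (star x * y)‖ ≤ (φ (star x * x)).re * (φ (star y * y)).re := by
  letI innerA : Inner ℂ A := ⟨fun x y => φ (star x * y)⟩
  letI core : PreInnerProductSpace.Core ℂ A :=
    { toInner := innerA
      conj_inner_symm := fun x y => by
        show (starRingEnd ℂ) (φ (star y * x)) = φ (star x * y)
        refine (state_conj φ hpos (star y * x)).symm.trans ?_
        rw [star_mul, star_star]
      re_inner_nonneg := fun x => by
        have h := hpos _ (star_mul_self_nonneg x)
        have := (Complex.le_def.mp h).1
        exact this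
      add_left := fun x y z => by
        show φ (star (x + y) * z) = φ (star x * z) + φ (star y * z)
        rw [star_add, add_mul, map_add]
      smul_left := fun x y r => by
        show φ (star (r • x) * y) = (starRingEnd ℂ) r * φ (star x * y)
        rw [star_smul, smul_mul_assoc, LinearMap.map_smul, smul_eq_mul, starRingEnd_apply] }
  have h : ‖φ (star x * y)‖ * ‖φ (star y * x)‖
      ≤ (φ (star x * x)).re * (φ (star y * y)).re :=
    InnerProductSpace.Core.inner_mul_inner_self_le (𝕜 := ℂ) (F := A) x y
  have hyx : φ (star y * x) = (starRingEnd ℂ) (φ (star x * y)) := by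
    have h1 := state_conj φ hpos (star x * y)
    rw [star_mul, star_star] at h1
    exact h1
  rw [hyx, RCLike.norm_conj] at h
  exact h

end StateAux

/-- Pointwise version of the statement. -/
lemma state_key {A : Type*} [NormedRing A] [StarRing A] [CStarRing A]
    [NormedAlgebra ℂ A] [CompleteSpace A] [StarModule ℂ A]
    [PartialOrder A] [StarOrderedRing A]
    (φ ψ : A →ₗ[ℂ] ℂ) (hφ1 : φ 1 = 1) (hpos : ∀ a : A, 0 ≤ a → 0 ≤ φ a)
    (u : A) (hu : star u * u = 1)
    (hψ : ∀ x : A, ψ x = φ (star u * x * u))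
    (a : ℕ → A) (ha : ∀ k, 0 ≤ a k ∧ a k ≤ 1)
    (h1 : Tendsto (fun k => ψ (a k)) atTop (nhds 0))
    (h2 : Tendsto (fun k => φ (1 - a k)) atTop (nhds 0)) :
    φ u = 0 := by
  letI : CStarAlgebra A := { ‹NormedRing A›, ‹StarRing A›, ‹CompleteSpace A›, ‹CStarRing A›,
    ‹NormedAlgebra ℂ A›, ‹StarModule ℂ A› with }
  have bound : ∀ k, ‖φ u‖ ≤ Real.sqrt ((ψ (a k)).re) + Real.sqrt ((φ (1 - a k)).re) := by
    intro k
    obtain ⟨hak0, hak1⟩ := ha k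
    set ak := a k with hak
    -- first piece : φ (ak * u)
    set s : A := CFC.sqrt ak with hsdef
    have hs0 : (0 : A) ≤ s := CFC.sqrt_nonneg ak
    have hssa : IsSelfAdjoint s := .of_nonneg hs0
    have hss : s * s = ak := CFC.sqrt_mul_sqrt_self ak hak0
    have e2 : star s * (s * u) = ak * u := by rw [hssa.star_eq, ← mul_assoc, hss]
    have e3 : star s * s = ak := by rw [hssa.star_eq, hss]
    have e1 : star (s * u) * (s * u) = star u * ak * u := by
      rw [star_mul, hssa.star_eq, mul_assoc, ← mul_assoc s s u, hss, ← mul_assoc]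
    have CS1 := state_cauchy_schwarz φ hpos s (s * u)
    rw [e2, e3, e1, ← hψ ak] at CS1
    have hψre0 : 0 ≤ (ψ ak).re := by
      rw [hψ]
      exact (Complex.le_def.mp (hpos _ (star_left_conjugate_nonneg hak0 u))).1
    have hφak1 : (φ ak).re ≤ 1 := by
      have := (Complex.le_def.mp (state_mono φ hpos hak1)).1
      rwa [hφ1, Complex.one_re] at this
    have b1 : ‖φ (ak * u)‖ * ‖φ (ak * u)‖ ≤ (ψ ak).re := by
      calc ‖φ (ak * u)‖ * ‖φ (ak * u)‖ ≤ (φ ak).re * (ψ ak).re := CS1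
        _ ≤ 1 * (ψ ak).re := mul_le_mul_of_nonneg_right hφak1 hψre0
        _ = (ψ ak).re := one_mul _
    have b1' : ‖φ (ak * u)‖ ≤ Real.sqrt ((ψ ak).re) := by
      rw [← Real.sqrt_mul_self (norm_nonneg (φ (ak * u)))]
      exact Real.sqrt_le_sqrt b1
    -- second piece : φ ((1 - ak) * u)
    have h0b : (0 : A) ≤ 1 - ak := sub_nonneg.mpr hak1
    have hb1 : (1 : A) - ak ≤ 1 := sub_le_self 1 hak0
    have hbsa : IsSelfAdjoint (1 - ak) := .of_nonneg h0b
    have sqle : (1 - ak) * (1 - ak) ≤ 1 - ak := by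
      have h := (CStarAlgebra.pow_antitone h0b hb1) (by norm_num : (1 : ℕ) ≤ 2)
      simpa [pow_two] using h
    have CS2 := state_cauchy_schwarz φ hpos (1 - ak) u
    rw [hbsa.star_eq, hu, hφ1] at CS2
    have hφsq : (φ ((1 - ak) * (1 - ak))).re ≤ (φ (1 - ak)).re :=
      (Complex.le_def.mp (state_mono φ hpos sqle)).1
    have b2 : ‖φ ((1 - ak) * u)‖ * ‖φ ((1 - ak) * u)‖ ≤ (φ (1 - ak)).re := by
      calc ‖φ ((1 - ak) * u)‖ * ‖φ ((1 - ak) * u)‖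
          ≤ (φ ((1 - ak) * (1 - ak))).re * (1 : ℂ).re := CS2
        _ = (φ ((1 - ak) * (1 - ak))).re := by rw [Complex.one_re, mul_one]
        _ ≤ (φ (1 - ak)).re := hφsq
    have b2' : ‖φ ((1 - ak) * u)‖ ≤ Real.sqrt ((φ (1 - ak)).re) := by
      rw [← Real.sqrt_mul_self (norm_nonneg (φ ((1 - ak) * u)))]
      exact Real.sqrt_le_sqrt b2
    -- combine
    have hsplit : φ u = φ (ak * u) + φ ((1 - ak) * u) := by
      rw [← map_add, ← add_mul]
      norm_num
    calc ‖φ u‖ = ‖φ (ak * u) + φ ((1 - ak) * u)‖ := by rw [hsplit]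
      _ ≤ ‖φ (ak * u)‖ + ‖φ ((1 - ak) * u)‖ := norm_add_le _ _
      _ ≤ Real.sqrt ((ψ ak).re) + Real.sqrt ((φ (1 - ak)).re) := add_le_add b1' b2'
  -- the right hand side tends to 0
  have hre1 : Tendsto (fun k => (ψ (a k)).re) atTop (nhds 0) := by
    have := (Complex.continuous_re.tendsto 0).comp h1
    simpa [Function.comp_def] using this
  have hre2 : Tendsto (fun k => (φ (1 - a k)).re) atTop (nhds 0) := by
    have := (Complex.continuous_re.tendsto 0).comp h2
    simpa [Function.comp_def] using this
  have hs1 : Tendsto (fun k => Real.sqrt ((ψ (a k)).re)) atTop (nhds 0) := by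
    have := (Real.continuous_sqrt.tendsto 0).comp hre1
    simpa [Function.comp_def] using this
  have hs2 : Tendsto (fun k => Real.sqrt ((φ (1 - a k)).re)) atTop (nhds 0) := by
    have := (Real.continuous_sqrt.tendsto 0).comp hre2
    simpa [Function.comp_def] using this
  have hg : Tendsto (fun k => Real.sqrt ((ψ (a k)).re) + Real.sqrt ((φ (1 - a k)).re))
      atTop (nhds 0) := by
    simpa using hs1.add hs2
  have : ‖φ u‖ ≤ 0 := le_of_tendsto_of_tendsto' tendsto_const_nhds hg bound
  simpa using le_antisymm this (norm_nonneg _)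

/-- Let `Γ` be a countable discrete group acting measurably on a
probability space `(B, ν)`, `A` a unital C*-algebra, `π : Γ → A` a group homomorphism
into the unitary group of `A`, and `b ↦ β b` an assignment of states on `A`.
Fix `γ ∈ Γ` and assume: (i) for `ν`-a.e. `b`, `β (γ • b) x = β b (π(γ)* x π(γ))` for all
`x`; (ii) for `ν`-a.e. `b`, the states `β (γ • b)` and `β b` are pairwise singular.
Then `β b (π γ) = 0` for `ν`-a.e. `b`. -/
theorem stmt_1 {Γ : Type*} [Group Γ] [Countable Γ]
    {B : Type*} [MeasurableSpace B] (ν : Measure B) [IsProbabilityMeasure ν]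
    [MulAction Γ B] (hact : ∀ γ : Γ, Measurable fun b : B => γ • b)
    {A : Type*} [NormedRing A] [StarRing A] [CStarRing A]
    [NormedAlgebra ℂ A] [CompleteSpace A] [StarModule ℂ A]
    [PartialOrder A] [StarOrderedRing A]
    (π : Γ →* unitary A)
    (β : B → (A →ₗ[ℂ] ℂ))
    (hβstate : ∀ b : B, β b 1 = 1 ∧ ∀ a : A, 0 ≤ a → 0 ≤ β b a)
    (γ : Γ)
    (hequiv : ∀ᵐ b ∂ν, ∀ x : A, β (γ • b) x = β b (star (π γ : A) * x * (π γ : A)))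
    (hsing : ∀ᵐ b ∂ν, ∃ a : ℕ → A, (∀ k, 0 ≤ a k ∧ a k ≤ 1) ∧
      Tendsto (fun k => β (γ • b) (a k)) atTop (nhds 0) ∧
      Tendsto (fun k => β b (1 - a k)) atTop (nhds 0)) :
    ∀ᵐ b ∂ν, β b (π γ : A) = 0 := by
  filter_upwards [hequiv, hsing] with b heq hsg
  obtain ⟨a, ha, hta, htb⟩ := hsg
  exact state_key (β b) (β (γ • b)) (hβstate b).1 (hβstate b).2 (π γ : A)
    (Unitary.star_mul_self_of_mem (π γ).prop) heq a ha hta htb
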